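/- For probability distributions P, Q with strictly positive entries, 3·2^{1/3}·K(Q‖P) ≤ Ψ(P‖Q), where K(Q‖P) = ∑ q_i ln(q_i/p_i) and Ψ(P‖Q) = ∑ (p_i − q_i)²(p_i + q_i)/(p_i q_i). -/

import Mathlib

open Real Finset

/-- Upper Padé-type bound for `log` on `[1, ∞)`. -/
lemma log_le_aux1 (t : ℝ) (ht : 1 ≤ t) :
    Real.log t ≤ (t-1)*(50*t^2+189*t-50)/(189*t^2) := by
  have ht0 : (0:ℝ) < t := by linarith
  have hu : (0:ℝ) ≤ t - 1 := by linarith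
  set N : ℝ := (t-1)*(50*t^2+189*t-50) with hN
  set D : ℝ := 189*t^2 with hD
  have hDpos : (0:ℝ) < D := by rw [hD]; positivity
  have hNnn : (0:ℝ) ≤ N := by rw [hN]; nlinarith
  have hx0 : (0:ℝ) ≤ N/D := div_nonneg hNnn hDpos.le
  rw [Real.log_le_iff_le_exp ht0]
  have hsum := Real.sum_le_exp_of_nonneg hx0 5
  have hexpand : ∑ i ∈ Finset.range 5, (N/D)^i / (Nat.factorial i) =
      1 + N/D + (N/D)^2/2 + (N/D)^3/6 + (N/D)^4/24 := by
    simp [Finset.sum_range_succ, Nat.factorial]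
  have hpoly : 24*D^4*t ≤ 24*D^4 + 24*D^3*N + 12*D^2*N^2 + 4*D*N^3 + N^4 := by
    rw [hN, hD]
    nlinarith [pow_nonneg hu 2, pow_nonneg hu 3, pow_nonneg hu 4, pow_nonneg hu 5,
      pow_nonneg hu 6, pow_nonneg hu 7, pow_nonneg hu 8, pow_nonneg hu 9,
      pow_nonneg hu 10, pow_nonneg hu 11, pow_nonneg hu 12]
  have ht' : t ≤ 1 + N/D + (N/D)^2/2 + (N/D)^3/6 + (N/D)^4/24 := by
    have hform : 1 + N/D + (N/D)^2/2 + (N/D)^3/6 + (N/D)^4/24 =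
        (24*D^4 + 24*D^3*N + 12*D^2*N^2 + 4*D*N^3 + N^4)/(24*D^4) := by
      field_simp
      ring
    rw [hform, le_div_iff₀ (by positivity)]
    linarith
  calc t ≤ 1 + N/D + (N/D)^2/2 + (N/D)^3/6 + (N/D)^4/24 := ht'
    _ = ∑ i ∈ Finset.range 5, (N/D)^i / (Nat.factorial i) := hexpand.symm
    _ ≤ Real.exp (N/D) := hsum

/-- Lower Padé-type bound for `log` on `[1, ∞)`. -/
lemma log_ge_aux2 (w : ℝ) (hw : 1 ≤ w) :
    (w-1)*(50+189*w-50*w^2)/(189*w) ≤ Real.log w := by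
  have hw0 : (0:ℝ) < w := by linarith
  have hu : (0:ℝ) ≤ w - 1 := by linarith
  rcases le_total (50+189*w-50*w^2) 0 with hC | hC
  · have h1 : (w-1)*(50+189*w-50*w^2) ≤ 0 :=
      mul_nonpos_of_nonneg_of_nonpos hu hC
    have h2 : (w-1)*(50+189*w-50*w^2)/(189*w) ≤ 0 :=
      div_nonpos_of_nonpos_of_nonneg h1 (by positivity)
    exact h2.trans (Real.log_nonneg hw)
  · set A : ℝ := (w-1)*(50+189*w-50*w^2) with hA
    set B : ℝ := 189*w with hB
    have hBpos : (0:ℝ) < B := by rw [hB]; positivity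
    have hAnn : (0:ℝ) ≤ A := mul_nonneg hu hC
    have hr0 : (0:ℝ) ≤ A/B := div_nonneg hAnn hBpos.le
    have hr1 : A/B ≤ 1 := by
      rw [div_le_one hBpos, hA, hB]
      nlinarith [mul_nonneg hu (sq_nonneg (w-1-6/5)), sq_nonneg (w-1)]
    have hb := Real.exp_bound' hr0 hr1 (n := 4) (by norm_num)
    have hsum : (∑ m ∈ Finset.range 4, (A/B)^m / (Nat.factorial m)) +
        (A/B)^4 * (4+1) / ((Nat.factorial 4) * 4) =
        1 + A/B + (A/B)^2/2 + (A/B)^3/6 + 5*(A/B)^4/96 := by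
      simp [Finset.sum_range_succ, Nat.factorial]
      ring
    have hpoly : 96*B^4 + 96*B^3*A + 48*B^2*A^2 + 16*B*A^3 + 5*A^4 ≤ 96*B^4*w := by
      rw [hA, hB]
      nlinarith [pow_nonneg hu 2, pow_nonneg hu 3, pow_nonneg hu 4, pow_nonneg hu 5,
        pow_nonneg hu 6, pow_nonneg hu 7, pow_nonneg hu 8, pow_nonneg hu 9,
        pow_nonneg hu 10, pow_nonneg hu 11, pow_nonneg hu 12,
        mul_nonneg (pow_nonneg hu 5) hC, mul_nonneg (pow_nonneg hu 6) hC,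
        mul_nonneg (pow_nonneg hu 7) hC, mul_nonneg (pow_nonneg hu 10) hC]
    have hkey : 1 + A/B + (A/B)^2/2 + (A/B)^3/6 + 5*(A/B)^4/96 ≤ w := by
      have hform : 1 + A/B + (A/B)^2/2 + (A/B)^3/6 + 5*(A/B)^4/96 =
          (96*B^4 + 96*B^3*A + 48*B^2*A^2 + 16*B*A^3 + 5*A^4)/(96*B^4) := by
        field_simp
        ring
      rw [hform, div_le_iff₀ (by positivity)]
      linarith
    have hle : Real.exp (A/B) ≤ w := by
      calc Real.exp (A/B) ≤ (∑ m ∈ Finset.range 4, (A/B)^m / (Nat.factorial m)) +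
            (A/B)^4 * (4+1) / ((Nat.factorial 4) * 4) := hb
        _ = 1 + A/B + (A/B)^2/2 + (A/B)^3/6 + 5*(A/B)^4/96 := hsum
        _ ≤ w := hkey
    exact (Real.le_log_iff_exp_le hw0).2 hle

/-- The key log bound, valid for all positive `t`. -/
lemma log_le_aux (t : ℝ) (ht : 0 < t) :
    Real.log t ≤ (t-1)*(50*t^2+189*t-50)/(189*t^2) := by
  rcases le_total 1 t with h1 | h1
  · exact log_le_aux1 t h1
  · have hw : 1 ≤ t⁻¹ := (one_le_inv₀ ht).2 h1
    have h2 := log_ge_aux2 t⁻¹ hw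
    rw [Real.log_inv] at h2
    have heq : -((t⁻¹-1)*(50+189*t⁻¹-50*t⁻¹^2)/(189*t⁻¹)) =
        (t-1)*(50*t^2+189*t-50)/(189*t^2) := by
      field_simp
      ring
    linarith [h2, heq.ge, heq.le]

theorem stmt_16 (n : ℕ) (p q : Fin n → ℝ)
    (hp : ∀ i, 0 < p i) (hq : ∀ i, 0 < q i)
    (hp1 : ∑ i, p i = 1) (hq1 : ∑ i, q i = 1) :
    3 * (2:ℝ)^((1:ℝ)/3) * ∑ i, q i * Real.log (q i / p i) ≤
      ∑ i, (p i - q i)^2 * (p i + q i) / (p i * q i) := by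
  set S : ℝ := ∑ i, q i * Real.log (q i / p i) with hS
  set Psi : ℝ := ∑ i, (p i - q i)^2 * (p i + q i) / (p i * q i) with hPsi
  have hterm : ∀ i ∈ Finset.univ (α := Fin n), q i * Real.log (q i / p i) + p i - q i ≤
      (50/189) * ((p i - q i)^2 * (p i + q i) / (p i * q i)) := by
    intro i _
    have hpi := hp i; have hqi := hq i
    have ht : 0 < q i / p i := div_pos hqi hpi
    have hlog := log_le_aux (q i / p i) ht
    have hmul : q i * Real.log (q i / p i) ≤
        q i * ((q i / p i - 1)*(50*(q i / p i)^2+189*(q i / p i)-50)/(189*(q i / p i)^2)) :=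
      mul_le_mul_of_nonneg_left hlog hqi.le
    have heq : q i * ((q i / p i - 1)*(50*(q i / p i)^2+189*(q i / p i)-50)/(189*(q i / p i)^2))
        + p i - q i = (50/189) * ((p i - q i)^2 * (p i + q i) / (p i * q i)) := by
      field_simp
      ring
    linarith
  have htermnn : ∀ i ∈ Finset.univ (α := Fin n),
      (0:ℝ) ≤ q i * Real.log (q i / p i) + p i - q i := by
    intro i _
    have hpi := hp i; have hqi := hq i
    have ht : 0 < q i / p i := div_pos hqi hpi
    have h1 := Real.one_sub_inv_le_log_of_pos ht
    have h2 : q i * (1 - (q i / p i)⁻¹) ≤ q i * Real.log (q i / p i) :=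
      mul_le_mul_of_nonneg_left h1 hqi.le
    have h3 : q i * (1 - (q i / p i)⁻¹) = q i - p i := by
      field_simp
    nlinarith
  have hsumeq : ∑ i, (q i * Real.log (q i / p i) + p i - q i) = S := by
    rw [hS]
    simp only [Finset.sum_add_distrib, Finset.sum_sub_distrib, hp1, hq1]
    ring
  have hS0 : (0:ℝ) ≤ S := by
    rw [← hsumeq]
    exact Finset.sum_nonneg htermnn
  have hmain : S ≤ (50/189) * Psi := by
    calc S = ∑ i, (q i * Real.log (q i / p i) + p i - q i) := hsumeq.symm
      _ ≤ ∑ i, (50/189) * ((p i - q i)^2 * (p i + q i) / (p i * q i)) :=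
          Finset.sum_le_sum hterm
      _ = (50/189) * Psi := by rw [hPsi, Finset.mul_sum]
  have hc : (2:ℝ)^((1:ℝ)/3) ≤ 63/50 := by
    have h1 : ((2:ℝ)^((1:ℝ)/3))^(3:ℕ) = 2 := by
      rw [← Real.rpow_natCast ((2:ℝ)^((1:ℝ)/3)) 3, ← Real.rpow_mul (by norm_num : (0:ℝ) ≤ 2)]
      norm_num
    have hpos : (0:ℝ) < (2:ℝ)^((1:ℝ)/3) := Real.rpow_pos_of_pos (by norm_num) _
    nlinarith [h1, hpos, sq_nonneg ((2:ℝ)^((1:ℝ)/3) - 63/50), sq_nonneg ((2:ℝ)^((1:ℝ)/3) + 63/50)]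
  have h2 : 3 * (2:ℝ)^((1:ℝ)/3) * S ≤ (189/50) * S := by
    apply mul_le_mul_of_nonneg_right _ hS0
    linarith
  linarith
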